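/- Let $V$ be a subspace of $\mathbb{R}^N$ of dimension $m \ge 1$ and let $x \in \mathbb{R}^N$ be a unit vector. Then $\inf \{ \|\Pi_V - \Pi_{V'}\| : V' \subseteq \mathbb{R}^N, \dim V' = m, x \in V' \} = \min_{w \in V, \|w\|=1} \sqrt{1 - \langle x, w \rangle^2}$, i.e., the projection distance from $V$ to the set of $m$-dimensional subspaces containing $x$ equals the sine of the principal angle between $x$ and $V$. -/

import Mathlib

open scoped BigOperators RealInnerProductSpace

noncomputable section

/-- Orthogonal projection onto a subspace of Euclidean space, as a continuous linear map. -/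
def projCLM {N : ℕ} (V : Submodule ℝ (EuclideanSpace ℝ (Fin N))) :
    EuclideanSpace ℝ (Fin N) →L[ℝ] EuclideanSpace ℝ (Fin N) :=
  V.subtypeL.comp (V.orthogonalProjection)

lemma projCLM_apply {N : ℕ} (V : Submodule ℝ (EuclideanSpace ℝ (Fin N)))
    (v : EuclideanSpace ℝ (Fin N)) :
    projCLM V v = ↑(Submodule.orthogonalProjection V v) := rfl

lemma projCLM_sup {N : ℕ} (u : EuclideanSpace ℝ (Fin N))
    (W : Submodule ℝ (EuclideanSpace ℝ (Fin N))) (hW : W ≤ (ℝ ∙ u)ᗮ) :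
    projCLM ((ℝ ∙ u) ⊔ W) = projCLM (ℝ ∙ u) + projCLM W := by
  refine ContinuousLinearMap.ext fun v => ?_
  rw [ContinuousLinearMap.add_apply, projCLM_apply, projCLM_apply, projCLM_apply]
  apply Submodule.eq_starProjection_of_mem_of_inner_eq_zero
  · exact Submodule.add_mem _ (Submodule.mem_sup_left (Submodule.orthogonalProjection (ℝ ∙ u) v).2)
      (Submodule.mem_sup_right (Submodule.orthogonalProjection W v).2)
  · intro z hz
    obtain ⟨z₁, h₁, z₂, h₂, rfl⟩ := Submodule.mem_sup.mp hz
    have e1 : ⟪v - ↑(Submodule.orthogonalProjection (ℝ ∙ u) v), z₁⟫ = 0 :=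
      (Submodule.mem_orthogonal' _ _).1 (Submodule.sub_starProjection_mem_orthogonal (K := ℝ ∙ u) v) z₁ h₁
    have e2 : ⟪v - ↑(Submodule.orthogonalProjection W v), z₂⟫ = 0 :=
      (Submodule.mem_orthogonal' _ _).1 (Submodule.sub_starProjection_mem_orthogonal (K := W) v) z₂ h₂
    have e3 : ⟪(Submodule.orthogonalProjection W v : EuclideanSpace ℝ (Fin N)), z₁⟫ = 0 := by
      have := (Submodule.mem_orthogonal _ _).1 (hW (Submodule.orthogonalProjection W v).2) z₁ h₁
      rwa [real_inner_comm] at this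
    have e4 : ⟪(Submodule.orthogonalProjection (ℝ ∙ u) v : EuclideanSpace ℝ (Fin N)), z₂⟫ = 0 := by
      have := (Submodule.mem_orthogonal' _ _).1 (hW h₂) _ (Submodule.orthogonalProjection (ℝ ∙ u) v).2
      rwa [real_inner_comm] at this
    have key : v - (↑(Submodule.orthogonalProjection (ℝ ∙ u) v) + ↑(Submodule.orthogonalProjection W v))
        = (v - ↑(Submodule.orthogonalProjection (ℝ ∙ u) v)) - ↑(Submodule.orthogonalProjection W v) := by abel
    rw [key]
    simp only [inner_sub_left, inner_add_right] at e1 e2 ⊢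
    linarith [e1, e2, e3, e4]

lemma key_norm_bound {N : ℕ} (w x : EuclideanSpace ℝ (Fin N)) (hw : ‖w‖ = 1) (hx : ‖x‖ = 1)
    (v : EuclideanSpace ℝ (Fin N)) :
    ‖⟪w, v⟫ • w - ⟪x, v⟫ • x‖ ≤ Real.sqrt (1 - ⟪x, w⟫ ^ 2) * ‖v‖ := by
  have hw2 : ⟪w, w⟫ = 1 := by rw [real_inner_self_eq_norm_sq, hw]; norm_num
  have hx2 : ⟪x, x⟫ = 1 := by rw [real_inner_self_eq_norm_sq, hx]; norm_num
  obtain ⟨c, hc⟩ : ∃ c : ℝ, ⟪x, w⟫ = c := ⟨_, rfl⟩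
  have hwx : ⟪w, x⟫ = c := by rw [real_inner_comm]; exact hc
  have hy2 : ‖x - c • w‖ ^ 2 = 1 - c ^ 2 := by
    rw [← real_inner_self_eq_norm_sq]
    simp only [inner_sub_left, inner_sub_right, inner_smul_left, inner_smul_right,
      starRingEnd_apply, star_trivial, hw2, hx2, hc, hwx]
    ring
  have hs : Real.sqrt (1 - ⟪x, w⟫ ^ 2) = ‖x - c • w‖ := by
    rw [hc, ← hy2, Real.sqrt_sq (norm_nonneg _)]
  rw [hs]
  rcases eq_or_ne (x - c • w) 0 with h0 | h0
  · have hxc : x = c • w := sub_eq_zero.mp h0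
    have hcc : c ^ 2 = 1 := by
      have h := hx2
      rw [hxc] at h
      simp only [inner_smul_left, inner_smul_right, starRingEnd_apply, star_trivial, hw2] at h
      nlinarith
    have hzero : ⟪w, v⟫ • w - ⟪x, v⟫ • x = 0 := by
      have hxv : ⟪x, v⟫ = c * ⟪w, v⟫ := by
        rw [hxc, inner_smul_left, starRingEnd_apply, star_trivial]
      rw [hxv, hxc, smul_smul]
      rw [← sub_smul]
      have hz : ⟪w, v⟫ - c * ⟪w, v⟫ * c = 0 := by linear_combination (-⟪w, v⟫) * hcc
      rw [hz, zero_smul]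
    rw [hzero]
    simp
    positivity
  · obtain ⟨s, hsdef⟩ : ∃ s : ℝ, ‖x - c • w‖ = s := ⟨_, rfl⟩
    rw [hsdef] at hy2 ⊢
    have hspos : 0 < s := hsdef ▸ norm_pos_iff.mpr h0
    have hcs : c ^ 2 + s ^ 2 = 1 := by nlinarith
    obtain ⟨e, hee, hwe, hxe⟩ : ∃ e : EuclideanSpace ℝ (Fin N),
        ⟪e, e⟫ = 1 ∧ ⟪w, e⟫ = 0 ∧ x = c • w + s • e := by
      refine ⟨s⁻¹ • (x - c • w), ?_, ?_, ?_⟩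
      · simp only [inner_smul_left, inner_smul_right, starRingEnd_apply, star_trivial]
        rw [real_inner_self_eq_norm_sq, hsdef]
        field_simp
      · simp only [inner_smul_right, inner_sub_right, inner_smul_right, hwx, hw2]
        ring
      · rw [smul_smul, mul_inv_cancel₀ hspos.ne', one_smul]
        abel
    have hev : ⟪e, w⟫ = 0 := by rw [real_inner_comm]; exact hwe
    obtain ⟨a, ha⟩ : ∃ a : ℝ, ⟪w, v⟫ = a := ⟨_, rfl⟩
    obtain ⟨b, hb⟩ : ∃ b : ℝ, ⟪e, v⟫ = b := ⟨_, rfl⟩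
    have hxv : ⟪x, v⟫ = c * a + s * b := by
      rw [hxe, inner_add_left, inner_smul_left, inner_smul_left, starRingEnd_apply,
        star_trivial, starRingEnd_apply, star_trivial, ha, hb]
    have hcomb : ⟪w, v⟫ • w - ⟪x, v⟫ • x
        = (s ^ 2 * a - c * s * b) • w - (s * c * a + s ^ 2 * b) • e := by
      rw [ha, hxv, hxe]
      match_scalars
      · linear_combination (-a) * hcs
      · ring
    have hnorm2 : ‖(s ^ 2 * a - c * s * b) • w - (s * c * a + s ^ 2 * b) • e‖ ^ 2
        = s ^ 2 * (a ^ 2 + b ^ 2) := by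
      rw [← real_inner_self_eq_norm_sq]
      simp only [inner_sub_left, inner_sub_right, inner_smul_left, inner_smul_right,
        starRingEnd_apply, star_trivial, hw2, hee, hwe, hev]
      linear_combination (s ^ 2 * (a ^ 2 + b ^ 2)) * hcs
    have hva : ⟪v, w⟫ = a := by rw [real_inner_comm]; exact ha
    have hvb : ⟪v, e⟫ = b := by rw [real_inner_comm]; exact hb
    have hab : a ^ 2 + b ^ 2 ≤ ‖v‖ ^ 2 := by
      have h := real_inner_self_nonneg (x := v - a • w - b • e)
      simp only [inner_sub_left, inner_sub_right, inner_smul_left, inner_smul_right,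
        starRingEnd_apply, star_trivial, hw2, hee, hwe, hev, ha, hb, hva, hvb] at h
      rw [real_inner_self_eq_norm_sq] at h
      nlinarith
    rw [hcomb]
    have h2 : (0:ℝ) ≤ s * ‖v‖ := by positivity
    calc ‖(s ^ 2 * a - c * s * b) • w - (s * c * a + s ^ 2 * b) • e‖
        = Real.sqrt (‖(s ^ 2 * a - c * s * b) • w - (s * c * a + s ^ 2 * b) • e‖ ^ 2) :=
          (Real.sqrt_sq (norm_nonneg _)).symm
      _ ≤ Real.sqrt ((s * ‖v‖) ^ 2) := by
          apply Real.sqrt_le_sqrt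
          rw [hnorm2]
          nlinarith [sq_nonneg s]
      _ = s * ‖v‖ := Real.sqrt_sq h2

lemma norm_inv_smul_unit {N : ℕ} (y : EuclideanSpace ℝ (Fin N)) (hy : y ≠ 0) :
    ‖‖y‖⁻¹ • y‖ = 1 := by
  rw [norm_smul, norm_inv, norm_norm, inv_mul_cancel₀ (norm_ne_zero_iff.2 hy)]

lemma proj_span_unit_apply {N : ℕ} (w : EuclideanSpace ℝ (Fin N)) (hw : ‖w‖ = 1)
    (v : EuclideanSpace ℝ (Fin N)) :
    (Submodule.orthogonalProjection (ℝ ∙ w) v : EuclideanSpace ℝ (Fin N)) = ⟪w, v⟫ • w := by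
  rw [← Submodule.starProjection_apply, Submodule.starProjection_singleton, hw]
  norm_num

set_option maxHeartbeats 1000000 in
/-- The projection distance from an `m`-dimensional subspace `V` to the set of
`m`-dimensional subspaces containing a given unit vector `x` equals
`min_{w ∈ V, ‖w‖=1} √(1 - ⟪x, w⟫²)`, the sine of the principal angle between `x` and `V`. -/
theorem dist_to_subspaces_containing_vector
    (N m : ℕ) (hm : 1 ≤ m)
    (V : Submodule ℝ (EuclideanSpace ℝ (Fin N)))
    (hV : Module.finrank ℝ V = m)
    (x : EuclideanSpace ℝ (Fin N)) (hx : ‖x‖ = 1) :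
    sInf {d : ℝ | ∃ V' : Submodule ℝ (EuclideanSpace ℝ (Fin N)),
        Module.finrank ℝ V' = m ∧ x ∈ V' ∧ d = ‖projCLM V - projCLM V'‖} =
      sInf {s : ℝ | ∃ w ∈ V, ‖w‖ = 1 ∧ s = Real.sqrt (1 - ⟪x, w⟫ ^ 2)} := by
  classical
  obtain ⟨u, hu_mem, hu_eq⟩ : ∃ u, u ∈ V ∧ (Submodule.orthogonalProjection V x : EuclideanSpace ℝ (Fin N)) = u :=
    ⟨_, (Submodule.orthogonalProjection V x).2, rfl⟩
  set d : ℝ := ‖x - u‖ with hd_def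
  have hd0 : 0 ≤ d := norm_nonneg _
  have h_orth : x - u ∈ Vᗮ := hu_eq ▸ Submodule.sub_starProjection_mem_orthogonal (K := V) x
  have hinner : ∀ z ∈ V, ⟪x, z⟫ = ⟪u, z⟫ := by
    intro z hz
    have h := (Submodule.mem_orthogonal' _ _).1 h_orth z hz
    rw [inner_sub_left] at h
    linarith
  have hux : ⟪u, x - u⟫ = 0 := (Submodule.mem_orthogonal _ _).1 h_orth u hu_mem
  have hpyth : ‖u‖ ^ 2 + d ^ 2 = 1 := by
    have hxsplit : x = u + (x - u) := by abel
    have h := norm_add_sq_real u (x - u)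
    rw [← hxsplit, hx, hux] at h
    rw [hd_def]
    nlinarith
  have hd2 : d ^ 2 = 1 - ‖u‖ ^ 2 := by linarith
  -- lower bound for the right-hand set
  have rhs_lb : ∀ s ∈ {s : ℝ | ∃ w ∈ V, ‖w‖ = 1 ∧ s = Real.sqrt (1 - ⟪x, w⟫ ^ 2)}, d ≤ s := by
    rintro s ⟨w, hwV, hw1, rfl⟩
    have h1 : ⟪x, w⟫ = ⟪u, w⟫ := hinner w hwV
    have h2 : |⟪u, w⟫| ≤ ‖u‖ := by
      have := abs_real_inner_le_norm u w
      rwa [hw1, mul_one] at this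
    have h3 : ⟪x, w⟫ ^ 2 ≤ ‖u‖ ^ 2 := by
      rw [h1]
      nlinarith [abs_nonneg ⟪u, w⟫, sq_abs ⟪u, w⟫]
    calc d = Real.sqrt (d ^ 2) := (Real.sqrt_sq hd0).symm
      _ ≤ Real.sqrt (1 - ⟪x, w⟫ ^ 2) := Real.sqrt_le_sqrt (by linarith)
  -- membership in the right-hand set
  have rhs_mem : d ∈ {s : ℝ | ∃ w ∈ V, ‖w‖ = 1 ∧ s = Real.sqrt (1 - ⟪x, w⟫ ^ 2)} := by
    by_cases hu0 : u = 0
    · obtain ⟨w₀, hw₀⟩ : ∃ w₀ : ↥V, w₀ ≠ 0 := by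
        rw [← @Module.finrank_pos_iff_exists_ne_zero ℝ]
        omega
      obtain ⟨z, hzV, hz0⟩ : ∃ z : EuclideanSpace ℝ (Fin N), z ∈ V ∧ z ≠ 0 :=
        ⟨↑w₀, w₀.2, fun h => hw₀ (Subtype.ext h)⟩
      refine ⟨‖z‖⁻¹ • z, V.smul_mem _ hzV, norm_inv_smul_unit z hz0, ?_⟩
      have h0 : ⟪x, ‖z‖⁻¹ • z⟫ = 0 := by
        rw [hinner _ (V.smul_mem _ hzV), hu0, inner_zero_left]
      rw [h0, hd_def, hu0]
      simp [hx]
    · refine ⟨‖u‖⁻¹ • u, V.smul_mem _ hu_mem, norm_inv_smul_unit _ hu0, ?_⟩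
      have h1 : ⟪x, ‖u‖⁻¹ • u⟫ = ‖u‖ := by
        rw [hinner _ (V.smul_mem _ hu_mem), inner_smul_right, real_inner_self_eq_norm_sq, sq,
          ← mul_assoc, inv_mul_cancel₀ (norm_ne_zero_iff.2 hu0), one_mul]
      rw [h1, ← hd2, Real.sqrt_sq hd0]
  -- lower bound for the left-hand set
  have lhs_lb : ∀ e ∈ {e : ℝ | ∃ V' : Submodule ℝ (EuclideanSpace ℝ (Fin N)),
      Module.finrank ℝ V' = m ∧ x ∈ V' ∧ e = ‖projCLM V - projCLM V'‖}, d ≤ e := by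
    rintro e ⟨V', hV'm, hxV', rfl⟩
    have hTx : (projCLM V - projCLM V') x = u - x := by
      rw [ContinuousLinearMap.sub_apply, projCLM_apply, projCLM_apply, hu_eq,
        ← Submodule.starProjection_apply, Submodule.starProjection_eq_self_iff.2 hxV']
    calc d = ‖(projCLM V - projCLM V') x‖ := by rw [hTx, norm_sub_rev]
      _ ≤ ‖projCLM V - projCLM V'‖ * ‖x‖ := (projCLM V - projCLM V').le_opNorm x
      _ = ‖projCLM V - projCLM V'‖ := by rw [hx, mul_one]
  -- membership in the left-hand set
  have lhs_mem : d ∈ {e : ℝ | ∃ V' : Submodule ℝ (EuclideanSpace ℝ (Fin N)),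
      Module.finrank ℝ V' = m ∧ x ∈ V' ∧ e = ‖projCLM V - projCLM V'‖} := by
    by_cases hxV : x ∈ V
    · have hux' : u = x := by rw [← hu_eq, ← Submodule.starProjection_apply, Submodule.starProjection_eq_self_iff.2 hxV]
      refine ⟨V, hV, hxV, ?_⟩
      rw [sub_self, hd_def, hux', sub_self, norm_zero, norm_zero]
    · have hx0 : x ≠ 0 := fun h => by simp [h] at hx
      obtain ⟨w, hwV, hw1, huw⟩ : ∃ w, w ∈ V ∧ ‖w‖ = 1 ∧ u = ‖u‖ • w := by
        by_cases hu0 : u = 0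
        · obtain ⟨w₀, hw₀⟩ : ∃ w₀ : ↥V, w₀ ≠ 0 := by
            rw [← @Module.finrank_pos_iff_exists_ne_zero ℝ]
            omega
          obtain ⟨z, hzV, hz0⟩ : ∃ z : EuclideanSpace ℝ (Fin N), z ∈ V ∧ z ≠ 0 :=
            ⟨↑w₀, w₀.2, fun h => hw₀ (Subtype.ext h)⟩
          exact ⟨‖z‖⁻¹ • z, V.smul_mem _ hzV, norm_inv_smul_unit z hz0, by rw [hu0]; simp⟩
        · refine ⟨‖u‖⁻¹ • u, V.smul_mem _ hu_mem, norm_inv_smul_unit _ hu0, ?_⟩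
          rw [smul_smul, mul_inv_cancel₀ (norm_ne_zero_iff.2 hu0), one_smul]
      have hw0 : w ≠ 0 := fun h => by simp [h] at hw1
      have hcw : ⟪x, w⟫ = ‖u‖ := by
        have h' : ⟪u, w⟫ = ‖u‖ := by
          conv_lhs => rw [huw]
          rw [inner_smul_left, starRingEnd_apply, star_trivial, real_inner_self_eq_norm_sq,
            hw1, one_pow, mul_one]
        rw [hinner w hwV, h']
      set W : Submodule ℝ (EuclideanSpace ℝ (Fin N)) := (ℝ ∙ w)ᗮ ⊓ V with hW_def
      have hspan_le : (ℝ ∙ w) ≤ V := (Submodule.span_singleton_le_iff_mem _ _).2 hwV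
      have hVdecomp : (ℝ ∙ w) ⊔ W = V := Submodule.sup_orthogonal_inf_of_hasOrthogonalProjection hspan_le
      have hW_w : W ≤ (ℝ ∙ w)ᗮ := inf_le_left
      have hW_x : W ≤ (ℝ ∙ x)ᗮ := by
        intro z hz
        rw [Submodule.mem_orthogonal_singleton_iff_inner_right]
        have h1 : ⟪w, z⟫ = 0 :=
          Submodule.mem_orthogonal_singleton_iff_inner_right.1 hz.1
        rw [hinner z hz.2, huw, inner_smul_left, h1]
        simp
      set V' : Submodule ℝ (EuclideanSpace ℝ (Fin N)) := (ℝ ∙ x) ⊔ W with hV'_def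
      have hxV' : x ∈ V' := Submodule.mem_sup_left (Submodule.mem_span_singleton_self x)
      have hrW : 1 + Module.finrank ℝ W = m := by
        have h := Submodule.finrank_add_inf_finrank_orthogonal hspan_le
        rw [finrank_span_singleton hw0, hV] at h
        exact h
      have hdisj : (ℝ ∙ x) ⊓ W = ⊥ := by
        rw [← le_bot_iff]
        calc (ℝ ∙ x) ⊓ W ≤ (ℝ ∙ x) ⊓ (ℝ ∙ x)ᗮ := inf_le_inf_left _ hW_x
          _ = ⊥ := (Submodule.orthogonal_disjoint _).eq_bot
      have hrV' : Module.finrank ℝ V' = m := by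
        have h := Submodule.finrank_sup_add_finrank_inf_eq (ℝ ∙ x) W
        rw [hdisj, finrank_span_singleton hx0, ← hV'_def] at h
        simp only [finrank_bot, add_zero] at h
        omega
      have hproj : projCLM V - projCLM V' = projCLM (ℝ ∙ w) - projCLM (ℝ ∙ x) := by
        rw [← hVdecomp, hV'_def, projCLM_sup w W hW_w, projCLM_sup x W hW_x]
        abel
      have hsd : Real.sqrt (1 - ⟪x, w⟫ ^ 2) = d := by
        rw [hcw, ← hd2, Real.sqrt_sq hd0]
      have hnorm_le : ‖projCLM (ℝ ∙ w) - projCLM (ℝ ∙ x)‖ ≤ d := by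
        apply ContinuousLinearMap.opNorm_le_bound _ hd0
        intro v
        rw [ContinuousLinearMap.sub_apply, projCLM_apply, projCLM_apply,
          proj_span_unit_apply w hw1, proj_span_unit_apply x hx]
        rw [← hsd]
        exact key_norm_bound w x hw1 hx v
      refine ⟨V', hrV', hxV', ?_⟩
      have hge : d ≤ ‖projCLM V - projCLM V'‖ := lhs_lb _ ⟨V', hrV', hxV', rfl⟩
      have hle : ‖projCLM V - projCLM V'‖ ≤ d := by rw [hproj]; exact hnorm_le
      linarith
  rw [le_antisymm (csInf_le ⟨d, lhs_lb⟩ lhs_mem) (le_csInf ⟨d, lhs_mem⟩ lhs_lb),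
    le_antisymm (csInf_le ⟨d, rhs_lb⟩ rhs_mem) (le_csInf ⟨d, rhs_mem⟩ rhs_lb)]

end
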